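/- For J > J_c := 1/(4(3−2√2)) and h ∈ ℝ, the second derivative of m ↦ p̃(m,h,J) = −J m² + J/2 + p((2m−1)J+h) is strictly positive if and only if φ₁(h,J) < m < φ₂(h,J), where φ_i(h,J) = 1/2 − h/(2J) + (1/(4J))·log a_i(J) and a_{1,2}(J) = [−(1/(2J)² + 8/(2J) − 4) ∓ (2 − 1/(2J))·√(1/(2J)² − 12/(2J) + 4)] / (4/(2J)). -/

import Mathlib

noncomputable def gH (h : ℝ) : ℝ :=
  (Real.sqrt (Real.exp (4 * h) + 4 * Real.exp (2 * h)) - Real.exp (2 * h)) / 2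

noncomputable def pH (h : ℝ) : ℝ :=
  -(1 - gH h) / 2 - (1 / 2) * Real.log (1 - gH h)

noncomputable def pTilde (m h J : ℝ) : ℝ :=
  -J * m ^ 2 + J / 2 + pH ((2 * m - 1) * J + h)

/-- `a_{1,2}(J)` of the paper: `s = -1` gives `a₁`, `s = 1` gives `a₂`. -/
noncomputable def aMD (s J : ℝ) : ℝ :=
  (-(1 / (2 * J) ^ 2 + 8 / (2 * J) - 4) +
      s * (2 - 1 / (2 * J)) * Real.sqrt (1 / (2 * J) ^ 2 - 12 / (2 * J) + 4)) / (4 / (2 * J))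

/-- `φ_i(h,J) = 1/2 − h/(2J) + (1/(4J))·log a_i(J)`. -/
noncomputable def phiMD (s h J : ℝ) : ℝ :=
  1 / 2 - h / (2 * J) + (1 / (4 * J)) * Real.log (aMD s J)

lemma gH_facts (x : ℝ) :
    0 < gH x ∧ gH x < 1 ∧ gH x ^ 2 = Real.exp (2 * x) * (1 - gH x) := by
  have he4 : Real.exp (4 * x) = Real.exp (2 * x) ^ 2 := by
    rw [show (4 : ℝ) * x = 2 * x + 2 * x by ring, Real.exp_add, sq]
  set e := Real.exp (2 * x) with he
  have he0 : 0 < e := Real.exp_pos _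
  have harg : 0 < Real.exp (4 * x) + 4 * Real.exp (2 * x) := by positivity
  set s := Real.sqrt (Real.exp (4 * x) + 4 * Real.exp (2 * x)) with hs
  have hs2 : s ^ 2 = e ^ 2 + 4 * e := by
    rw [hs, Real.sq_sqrt harg.le, he4]
  have hs0 : 0 ≤ s := Real.sqrt_nonneg _
  have hsgt : e < s := by nlinarith
  have hslt : s < e + 2 := by nlinarith
  have hg : gH x = (s - e) / 2 := rfl
  refine ⟨by rw [hg]; linarith, by rw [hg]; linarith, ?_⟩
  rw [hg]; nlinarith

lemma hasDerivAt_gH (x : ℝ) :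
    HasDerivAt gH (2 * gH x * (1 - gH x) / (2 - gH x)) x := by
  have he4 : Real.exp (4 * x) = Real.exp (2 * x) ^ 2 := by
    rw [show (4 : ℝ) * x = 2 * x + 2 * x by ring, Real.exp_add, sq]
  have he0 : 0 < Real.exp (2 * x) := Real.exp_pos _
  have harg : 0 < Real.exp (4 * x) + 4 * Real.exp (2 * x) := by positivity
  have h4 : HasDerivAt (fun y : ℝ => Real.exp (4 * y)) (Real.exp (4 * x) * 4) x := by
    simpa using ((hasDerivAt_id x).const_mul (4:ℝ)).exp
  have h2 : HasDerivAt (fun y : ℝ => Real.exp (2 * y)) (Real.exp (2 * x) * 2) x := by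
    simpa using ((hasDerivAt_id x).const_mul (2:ℝ)).exp
  have hin : HasDerivAt (fun y : ℝ => Real.exp (4 * y) + 4 * Real.exp (2 * y))
      (Real.exp (4 * x) * 4 + 4 * (Real.exp (2 * x) * 2)) x := h4.add (h2.const_mul 4)
  have hsq := hin.sqrt (ne_of_gt harg)
  have hfull := (hsq.sub h2).div_const 2
  have : gH = fun y : ℝ =>
      (Real.sqrt (Real.exp (4 * y) + 4 * Real.exp (2 * y)) - Real.exp (2 * y)) / 2 := rfl
  rw [this]
  convert (show HasDerivAt (fun y : ℝ =>
      (Real.sqrt (Real.exp (4 * y) + 4 * Real.exp (2 * y)) - Real.exp (2 * y)) / 2) _ x from hfull) using 1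
  -- value equality
  set e := Real.exp (2 * x) with he
  set s := Real.sqrt (Real.exp (4 * x) + 4 * Real.exp (2 * x)) with hs
  have hs2 : s ^ 2 = e ^ 2 + 4 * e := by rw [hs, Real.sq_sqrt harg.le, he4]
  have hs0 : 0 ≤ s := Real.sqrt_nonneg _
  have hsgt : e < s := by nlinarith
  have hslt : s < e + 2 := by nlinarith
  have hg : gH x = (s - e) / 2 := rfl
  simp only
  rw [← hs, ← he, he4]
  have h2g : (0:ℝ) < 4 - s + e := by linarith
  have hsne : s ≠ 0 := by positivity
  rw [div_eq_div_iff (by linarith) (by norm_num)]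
  field_simp
  ring_nf
  nlinarith [hs2, hsgt, hslt]

lemma hasDerivAt_pH (x : ℝ) : HasDerivAt pH (gH x) x := by
  obtain ⟨hg0, hg1, _⟩ := gH_facts x
  have hgd := hasDerivAt_gH x
  have h1g : (0:ℝ) < 1 - gH x := by linarith
  have h2g : (0:ℝ) < 2 - gH x := by linarith
  have hA : HasDerivAt (fun y : ℝ => 1 - gH y)
      (-(2 * gH x * (1 - gH x) / (2 - gH x))) x := by
    simpa using (show HasDerivAt (fun y : ℝ => 1 - gH y) (0 - 2 * gH x * (1 - gH x) / (2 - gH x)) x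
      from (hasDerivAt_const x (1:ℝ)).sub hgd)
  have hB := hA.neg.div_const 2
  have hC := (hA.log (ne_of_gt h1g)).const_mul (1/2 : ℝ)
  have hfull := hB.sub hC
  have hpH : pH = fun y : ℝ => -(1 - gH y) / 2 - 1 / 2 * Real.log (1 - gH y) := rfl
  rw [hpH]
  convert (show HasDerivAt (fun y : ℝ => -(1 - gH y) / 2 - 1 / 2 * Real.log (1 - gH y)) _ x
    from hfull) using 1
  field_simp
  ring

lemma quad_iff (c d g : ℝ) (hd0 : 0 ≤ d) (hd2 : d ^ 2 = c ^ 2 - 12 * c + 4) :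
    0 < -2 * g ^ 2 + (2 + c) * g - 2 * c ↔
      (2 + c - d) / 4 < g ∧ g < (2 + c + d) / 4 := by
  have hfac : -2 * g ^ 2 + (2 + c) * g - 2 * c =
      2 * (g - (2 + c - d) / 4) * ((2 + c + d) / 4 - g) := by
    linear_combination (-1/8 : ℝ) * hd2
  rw [hfac]
  constructor
  · intro H
    constructor <;> by_contra hcon <;> push_neg at hcon <;> nlinarith
  · rintro ⟨h1, h2⟩
    have := mul_pos (by linarith : (0:ℝ) < g - (2 + c - d) / 4)
      (by linarith : (0:ℝ) < (2 + c + d) / 4 - g)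
    nlinarith

lemma mono_aux {u v : ℝ} (hu0 : 0 < u) (hu1 : u < 1) (hv0 : 0 < v) (hv1 : v < 1) :
    u < v ↔ u ^ 2 / (1 - u) < v ^ 2 / (1 - v) := by
  rw [div_lt_div_iff₀ (by linarith) (by linarith)]
  constructor <;> intro H
  · nlinarith [mul_pos (sub_pos.2 H) (show (0:ℝ) < u + v - u * v by nlinarith)]
  · by_contra hcon
    push_neg at hcon
    nlinarith [mul_nonneg (sub_nonneg.2 hcon) (show (0:ℝ) ≤ u + v - u * v by nlinarith)]


set_option maxHeartbeats 1000000 in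
/-- for `J > J_c` the second derivative of `m ↦ p̃(m,h,J)` is strictly
positive iff `φ₁(h,J) < m < φ₂(h,J)`. -/
theorem stmt16 (h J : ℝ) (hJ : 1 / (4 * (3 - 2 * Real.sqrt 2)) < J) (m : ℝ) :
    0 < deriv (deriv (fun m' : ℝ => pTilde m' h J)) m ↔
      phiMD (-1) h J < m ∧ m < phiMD 1 h J := by
  have hrt2 : Real.sqrt 2 ^ 2 = 2 := Real.sq_sqrt (by norm_num)
  have hrt2a : (1:ℝ) < Real.sqrt 2 := by nlinarith [Real.sqrt_nonneg 2]
  have hrt2b : Real.sqrt 2 < 1.5 := by nlinarith [Real.sqrt_nonneg 2]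
  have h32 : (0:ℝ) < 3 - 2 * Real.sqrt 2 := by linarith
  have hJ0 : 0 < J := lt_trans (by positivity) hJ
  set c : ℝ := 1 / (2 * J) with hc
  have hc0 : 0 < c := by positivity
  have hcu : c < 6 - 4 * Real.sqrt 2 := by
    rw [hc, div_lt_iff₀ (by positivity)]
    have h1 : 1 < J * (4 * (3 - 2 * Real.sqrt 2)) :=
      (div_lt_iff₀ (by positivity)).1 hJ
    nlinarith
  have hc2 : c < 2 := by nlinarith
  have hD : 0 < c ^ 2 - 12 * c + 4 := by
    nlinarith [mul_pos (sub_pos.2 hcu) (show (0:ℝ) < 6 + 4 * Real.sqrt 2 - c by nlinarith)]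
  set d : ℝ := Real.sqrt (c ^ 2 - 12 * c + 4) with hdd
  have hd0 : 0 < d := Real.sqrt_pos.2 hD
  have hd2 : d ^ 2 = c ^ 2 - 12 * c + 4 := Real.sq_sqrt hD.le
  have hdlt : d < 2 - c := by nlinarith
  set g1 : ℝ := (2 + c - d) / 4 with hg1d
  set g2 : ℝ := (2 + c + d) / 4 with hg2d
  have hg10 : 0 < g1 := by rw [hg1d]; linarith
  have hg21 : g2 < 1 := by rw [hg2d]; linarith
  have hg12 : g1 < g2 := by rw [hg1d, hg2d]; linarith
  have hg20 : 0 < g2 := lt_trans hg10 hg12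
  have hg11 : g1 < 1 := lt_trans hg12 hg21
  -- aMD identities
  have harg2 : 1 / (2 * J) ^ 2 - 12 / (2 * J) + 4 = c ^ 2 - 12 * c + 4 := by rw [hc]; ring
  have haMD : ∀ s : ℝ, aMD s J = (-(c ^ 2 + 8 * c - 4) + s * (2 - c) * d) / (4 * c) := by
    intro s
    unfold aMD
    rw [harg2, ← hdd, hc]
    field_simp
  have ha1 : aMD (-1) J = g1 ^ 2 / (1 - g1) := by
    rw [haMD, div_eq_div_iff (by positivity) (by linarith : (0:ℝ) < 1 - g1).ne', hg1d]
    linear_combination (-(1/2) : ℝ) * hd2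
  have ha2 : aMD 1 J = g2 ^ 2 / (1 - g2) := by
    rw [haMD, div_eq_div_iff (by positivity) (by linarith : (0:ℝ) < 1 - g2).ne', hg2d]
    linear_combination (-(1/2) : ℝ) * hd2
  have ha1pos : 0 < aMD (-1) J := by
    rw [ha1]; exact div_pos (pow_pos hg10 2) (by linarith)
  have ha2pos : 0 < aMD 1 J := by
    rw [ha2]; exact div_pos (pow_pos hg20 2) (by linarith)
  -- first derivative
  have hinner : ∀ y : ℝ, HasDerivAt (fun m' : ℝ => (2 * m' - 1) * J + h) (2 * J) y := by
    intro y
    simpa using ((((hasDerivAt_id y).const_mul (2:ℝ)).sub_const 1).mul_const J).add_const h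
  have hd1 : ∀ y : ℝ, HasDerivAt (fun m' : ℝ => pTilde m' h J)
      (-J * (2 * y) + gH ((2 * y - 1) * J + h) * (2 * J)) y := by
    intro y
    have hcomp : HasDerivAt (fun m' : ℝ => pH ((2 * m' - 1) * J + h))
        (gH ((2 * y - 1) * J + h) * (2 * J)) y :=
      (hasDerivAt_pH _).comp y (hinner y)
    have hq : HasDerivAt (fun m' : ℝ => -J * m' ^ 2 + J / 2) (-J * (2 * y)) y := by
      have := ((hasDerivAt_pow 2 y).const_mul (-J)).add_const (J / 2)
      simpa using this
    simpa [pTilde] using (show HasDerivAt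
      (fun m' : ℝ => -J * m' ^ 2 + J / 2 + pH ((2 * m' - 1) * J + h)) _ y from hq.add hcomp)
  have hD1 : (deriv fun m' : ℝ => pTilde m' h J) =
      fun y => -J * (2 * y) + gH ((2 * y - 1) * J + h) * (2 * J) :=
    funext fun y => (hd1 y).deriv
  -- second derivative at m
  set ξ : ℝ := (2 * m - 1) * J + h with hξ
  obtain ⟨hg0, hgl1, hgsq⟩ := gH_facts ξ
  set g : ℝ := gH ξ with hgdef
  have h2g : (0:ℝ) < 2 - g := by linarith
  have hgcomp : HasDerivAt (fun y : ℝ => gH ((2 * y - 1) * J + h))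
      (2 * g * (1 - g) / (2 - g) * (2 * J)) m :=
    by have := (hasDerivAt_gH ξ).comp m (hinner m); exact this
  have hd2nd : HasDerivAt (fun y : ℝ => -J * (2 * y) + gH ((2 * y - 1) * J + h) * (2 * J))
      (-J * 2 + 2 * g * (1 - g) / (2 - g) * (2 * J) * (2 * J)) m := by
    have hlin : HasDerivAt (fun y : ℝ => -J * (2 * y)) (-J * 2) m := by
      simpa using ((hasDerivAt_id m).const_mul (2:ℝ)).const_mul (-J)
    exact hlin.add (hgcomp.mul_const (2 * J))
  have h2v : deriv (deriv (fun m' : ℝ => pTilde m' h J)) m =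
      -J * 2 + 2 * g * (1 - g) / (2 - g) * (2 * J) * (2 * J) := by
    rw [hD1]; exact hd2nd.deriv
  rw [h2v]
  have heq : -J * 2 + 2 * g * (1 - g) / (2 - g) * (2 * J) * (2 * J) =
      2 * J * (2 * J) / (2 - g) * (-2 * g ^ 2 + (2 + c) * g - 2 * c) := by
    rw [hc]; field_simp; ring
  rw [heq, mul_pos_iff_of_pos_left (div_pos (by positivity) h2g),
    quad_iff c d g hd0.le hd2, ← hg1d, ← hg2d]
  -- translate g-bounds to m-bounds
  have hx : Real.exp (2 * ξ) = g ^ 2 / (1 - g) := by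
    rw [eq_div_iff (by linarith : (1:ℝ) - g ≠ 0)]
    linarith [hgsq]
  have e4J : ∀ L : ℝ, 4 * J * (m - (1 / 2 - h / (2 * J) + 1 / (4 * J) * L)) =
      2 * ξ - L := by
    intro L; rw [hξ]; field_simp; ring
  have hlin_iff : ∀ L : ℝ, (1 / 2 - h / (2 * J) + 1 / (4 * J) * L < m ↔ L < 2 * ξ) := by
    intro L
    constructor
    · intro H
      have P := mul_pos (by positivity : (0:ℝ) < 4 * J) (sub_pos.2 H)
      have := e4J L
      linarith
    · intro H
      have P : 0 < 4 * J * (m - (1 / 2 - h / (2 * J) + 1 / (4 * J) * L)) := by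
        rw [e4J L]; linarith
      have := (mul_pos_iff_of_pos_left (show (0:ℝ) < 4 * J by positivity)).1 P
      linarith
  have hlin_iff' : ∀ L : ℝ, (m < 1 / 2 - h / (2 * J) + 1 / (4 * J) * L ↔ 2 * ξ < L) := by
    intro L
    constructor
    · intro H
      have P : 4 * J * (m - (1 / 2 - h / (2 * J) + 1 / (4 * J) * L)) < 0 :=
        mul_neg_of_pos_of_neg (by positivity) (by linarith)
      rw [e4J L] at P
      linarith
    · intro H
      have P : 4 * J * (m - (1 / 2 - h / (2 * J) + 1 / (4 * J) * L)) < 0 := by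
        rw [e4J L]; linarith
      by_contra hcon
      push_neg at hcon
      have : 0 ≤ 4 * J * (m - (1 / 2 - h / (2 * J) + 1 / (4 * J) * L)) :=
        mul_nonneg (by positivity) (by linarith)
      linarith
  have left_iff : g1 < g ↔ phiMD (-1) h J < m := by
    rw [mono_aux hg10 hg11 hg0 hgl1, ← hx, ← ha1,
      ← Real.log_lt_iff_lt_exp ha1pos]
    exact (hlin_iff (Real.log (aMD (-1) J))).symm
  have right_iff : g < g2 ↔ m < phiMD 1 h J := by
    rw [mono_aux hg0 hgl1 hg20 hg21, ← hx, ← ha2,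
      ← Real.lt_log_iff_exp_lt ha2pos]
    exact (hlin_iff' (Real.log (aMD 1 J))).symm
  exact and_congr left_iff right_iff
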